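/- arXiv:2205.06467 — 3 statements merged into one kernel-verified Lean document; each statement's English description precedes it below -/
import Mathlib

section
/- Let U_+ and U_- be real numbers with U_- < 0 < U_+, let c = -(U_+ + U_-)/(U_+ - U_-), and let ξ_0 ∈ ℝ. Define U_c : ℝ → ℝ by U_c(ξ) = U_+(1 - e^{(1+c)(ξ_0 - ξ)}) for ξ > ξ_0 and U_c(ξ) = U_-(1 - e^{(1-c)(ξ - ξ_0)}) for ξ ≤ ξ_0. Then U_c(ξ_0) = 0, U_c(ξ) > 0 for ξ > ξ_0, U_c(ξ) < 0 for ξ < ξ_0, U_c(ξ) → U_± as ξ → ±∞, and U_c satisfies -c U_c'(ξ) = U_c'(ξ) + U_c''(ξ) for all ξ > ξ_0 and -c U_c'(ξ) = -U_c'(ξ) + U_c''(ξ) for all ξ < ξ_0; consequently u(t,x) := U_c(x - ct) satisfies the modular Burgers' equation u_t = ∂_x|u| + u_{xx} at every point with x - ct ≠ ξ_0. -/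
open Filter Real

/-- The traveling viscous shock profile of the modular Burgers' equation
`u_t = ∂_x|u| + u_{xx}`: with `U_- < 0 < U_+`, speed `c = -(U_+ + U_-)/(U_+ - U_-)` and
interface `ξ0`, the profile `U_c` vanishes at `ξ0`, is positive to the right and negative
to the left of the interface, tends to `U_±` at `±∞`, satisfies the traveling-wave ODEs
on either side of the interface, and `u(t,x) := U_c(x - ct)` satisfies the modular
Burgers' equation at every point with `x - ct ≠ ξ0`. -/
theorem stmt_0 (Up Um : ℝ) (hUm : Um < 0) (hUp : 0 < Up) (ξ0 : ℝ)
    (c : ℝ) (hc : c = -(Up + Um) / (Up - Um))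
    (Uc : ℝ → ℝ)
    (hUc : ∀ ξ : ℝ, Uc ξ =
      if ξ0 < ξ then Up * (1 - Real.exp ((1 + c) * (ξ0 - ξ)))
      else Um * (1 - Real.exp ((1 - c) * (ξ - ξ0)))) :
    Uc ξ0 = 0 ∧
    (∀ ξ : ℝ, ξ0 < ξ → 0 < Uc ξ) ∧
    (∀ ξ : ℝ, ξ < ξ0 → Uc ξ < 0) ∧
    Filter.Tendsto Uc Filter.atTop (nhds Up) ∧
    Filter.Tendsto Uc Filter.atBot (nhds Um) ∧
    (∀ ξ : ℝ, ξ0 < ξ → -c * deriv Uc ξ = deriv Uc ξ + deriv (deriv Uc) ξ) ∧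
    (∀ ξ : ℝ, ξ < ξ0 → -c * deriv Uc ξ = -deriv Uc ξ + deriv (deriv Uc) ξ) ∧
    (∀ t x : ℝ, x - c * t ≠ ξ0 →
      deriv (fun s : ℝ => Uc (x - c * s)) t =
        deriv (fun y : ℝ => |Uc (y - c * t)|) x +
          deriv (deriv (fun y : ℝ => Uc (y - c * t))) x) := by
  have hd : (0:ℝ) < Up - Um := by linarith
  have h1c : 0 < 1 + c := by
    have : 1 + c = -(2*Um) / (Up - Um) := by rw [hc]; field_simp; ring
    exact this ▸ div_pos (by linarith) hd
  have h1c' : 0 < 1 - c := by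
    have : 1 - c = (2*Up) / (Up - Um) := by rw [hc]; field_simp; ring
    exact this ▸ div_pos (by linarith) hd
  -- derivative building blocks
  have hE : ∀ a ξ : ℝ, HasDerivAt (fun ξ => Real.exp (a*(ξ0-ξ))) (-a * Real.exp (a*(ξ0-ξ))) ξ := by
    intro a ξ
    have h := (((hasDerivAt_id ξ).const_sub ξ0).const_mul a).exp
    simp only [id_eq] at h
    convert h using 1; ring
  have hE' : ∀ a ξ : ℝ, HasDerivAt (fun ξ => Real.exp (a*(ξ-ξ0))) (a * Real.exp (a*(ξ-ξ0))) ξ := by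
    intro a ξ
    have h := (((hasDerivAt_id ξ).sub_const ξ0).const_mul a).exp
    simp only [id_eq] at h
    convert h using 1; ring
  have hf : ∀ ξ : ℝ, HasDerivAt (fun ξ => Up * (1 - Real.exp ((1+c)*(ξ0-ξ))))
      (Up*(1+c) * Real.exp ((1+c)*(ξ0-ξ))) ξ := by
    intro ξ
    have h := ((hE (1+c) ξ).const_sub 1).const_mul Up
    exact h.congr_deriv (by ring)
  have hdf : ∀ ξ : ℝ, HasDerivAt (fun ξ => Up*(1+c) * Real.exp ((1+c)*(ξ0-ξ)))
      (-(1+c) * (Up*(1+c) * Real.exp ((1+c)*(ξ0-ξ)))) ξ := by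
    intro ξ
    have h := (hE (1+c) ξ).const_mul (Up*(1+c))
    exact h.congr_deriv (by ring)
  have hg : ∀ ξ : ℝ, HasDerivAt (fun ξ => Um * (1 - Real.exp ((1-c)*(ξ-ξ0))))
      (-(Um*(1-c)) * Real.exp ((1-c)*(ξ-ξ0))) ξ := by
    intro ξ
    have h := ((hE' (1-c) ξ).const_sub 1).const_mul Um
    exact h.congr_deriv (by ring)
  have hdg : ∀ ξ : ℝ, HasDerivAt (fun ξ => -(Um*(1-c)) * Real.exp ((1-c)*(ξ-ξ0)))
      ((1-c) * (-(Um*(1-c)) * Real.exp ((1-c)*(ξ-ξ0)))) ξ := by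
    intro ξ
    have h := (hE' (1-c) ξ).const_mul (-(Um*(1-c)))
    exact h.congr_deriv (by ring)
  -- locality
  have hUright : ∀ p : ℝ, ξ0 < p →
      Uc =ᶠ[nhds p] (fun ξ => Up * (1 - Real.exp ((1+c)*(ξ0-ξ)))) := by
    intro p hp
    filter_upwards [Ioi_mem_nhds hp] with ξ hξ
    rw [hUc ξ, if_pos (Set.mem_Ioi.mp hξ)]
  have hUleft : ∀ p : ℝ, p < ξ0 →
      Uc =ᶠ[nhds p] (fun ξ => Um * (1 - Real.exp ((1-c)*(ξ-ξ0)))) := by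
    intro p hp
    filter_upwards [Iio_mem_nhds hp] with ξ hξ
    rw [hUc ξ, if_neg (not_lt.mpr (Set.mem_Iio.mp hξ).le)]
  have hU'r : ∀ p : ℝ, ξ0 < p →
      HasDerivAt Uc (Up*(1+c) * Real.exp ((1+c)*(ξ0-p))) p :=
    fun p hp => (hf p).congr_of_eventuallyEq (hUright p hp)
  have hU'l : ∀ p : ℝ, p < ξ0 →
      HasDerivAt Uc (-(Um*(1-c)) * Real.exp ((1-c)*(p-ξ0))) p :=
    fun p hp => (hg p).congr_of_eventuallyEq (hUleft p hp)
  have hdUr : ∀ p : ℝ, ξ0 < p → deriv Uc p = Up*(1+c) * Real.exp ((1+c)*(ξ0-p)) :=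
    fun p hp => (hU'r p hp).deriv
  have hdUl : ∀ p : ℝ, p < ξ0 → deriv Uc p = -(Um*(1-c)) * Real.exp ((1-c)*(p-ξ0)) :=
    fun p hp => (hU'l p hp).deriv
  have hdUrE : ∀ p : ℝ, ξ0 < p →
      deriv Uc =ᶠ[nhds p] (fun ξ => Up*(1+c) * Real.exp ((1+c)*(ξ0-ξ))) := by
    intro p hp
    filter_upwards [Ioi_mem_nhds hp] with ξ hξ
    exact hdUr ξ hξ
  have hdUlE : ∀ p : ℝ, p < ξ0 →
      deriv Uc =ᶠ[nhds p] (fun ξ => -(Um*(1-c)) * Real.exp ((1-c)*(ξ-ξ0))) := by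
    intro p hp
    filter_upwards [Iio_mem_nhds hp] with ξ hξ
    exact hdUl ξ hξ
  have hddUr : ∀ p : ℝ, ξ0 < p →
      deriv (deriv Uc) p = -(1+c) * (Up*(1+c) * Real.exp ((1+c)*(ξ0-p))) :=
    fun p hp => ((hdf p).congr_of_eventuallyEq (hdUrE p hp)).deriv
  have hddUl : ∀ p : ℝ, p < ξ0 →
      deriv (deriv Uc) p = (1-c) * (-(Um*(1-c)) * Real.exp ((1-c)*(p-ξ0))) :=
    fun p hp => ((hdg p).congr_of_eventuallyEq (hdUlE p hp)).deriv
  -- item 1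
  have item1 : Uc ξ0 = 0 := by rw [hUc ξ0, if_neg (lt_irrefl ξ0)]; simp
  -- item 2
  have item2 : ∀ ξ : ℝ, ξ0 < ξ → 0 < Uc ξ := by
    intro ξ hξ
    rw [hUc ξ, if_pos hξ]
    have hlt : Real.exp ((1+c)*(ξ0-ξ)) < 1 :=
      Real.exp_lt_one_iff.mpr (mul_neg_of_pos_of_neg h1c (by linarith))
    exact mul_pos hUp (by linarith)
  -- item 3
  have item3 : ∀ ξ : ℝ, ξ < ξ0 → Uc ξ < 0 := by
    intro ξ hξ
    rw [hUc ξ, if_neg (not_lt.mpr hξ.le)]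
    have hlt : Real.exp ((1-c)*(ξ-ξ0)) < 1 :=
      Real.exp_lt_one_iff.mpr (mul_neg_of_pos_of_neg h1c' (by linarith))
    exact mul_neg_of_neg_of_pos hUm (by linarith)
  -- item 4
  have item4 : Tendsto Uc atTop (nhds Up) := by
    have harg : Tendsto (fun ξ : ℝ => (1+c)*(ξ0-ξ)) atTop atBot := by
      apply Tendsto.const_mul_atBot h1c
      exact (tendsto_atBot_add_const_left atTop ξ0 tendsto_neg_atTop_atBot).congr (fun x => by ring)
    have hexp : Tendsto (fun ξ : ℝ => Real.exp ((1+c)*(ξ0-ξ))) atTop (nhds 0) :=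
      Real.tendsto_exp_atBot.comp harg
    have hmain : Tendsto (fun ξ : ℝ => Up * (1 - Real.exp ((1+c)*(ξ0-ξ)))) atTop (nhds Up) := by
      have h := ((tendsto_const_nhds :
        Filter.Tendsto (fun _ : ℝ => (1:ℝ)) atTop (nhds 1)).sub hexp).const_mul Up
      simpa using h
    apply hmain.congr'
    filter_upwards [eventually_gt_atTop ξ0] with ξ hξ
    rw [hUc ξ, if_pos hξ]
  -- item 5
  have item5 : Tendsto Uc atBot (nhds Um) := by
    have harg : Tendsto (fun ξ : ℝ => (1-c)*(ξ-ξ0)) atBot atBot := by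
      apply Tendsto.const_mul_atBot h1c'
      exact (tendsto_atBot_add_const_right atBot (-ξ0) tendsto_id).congr (fun x => by simp [sub_eq_add_neg])
    have hexp : Tendsto (fun ξ : ℝ => Real.exp ((1-c)*(ξ-ξ0))) atBot (nhds 0) :=
      Real.tendsto_exp_atBot.comp harg
    have hmain : Tendsto (fun ξ : ℝ => Um * (1 - Real.exp ((1-c)*(ξ-ξ0)))) atBot (nhds Um) := by
      have h := ((tendsto_const_nhds :
        Filter.Tendsto (fun _ : ℝ => (1:ℝ)) atBot (nhds 1)).sub hexp).const_mul Um
      simpa using h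
    apply hmain.congr'
    filter_upwards [eventually_lt_atBot ξ0] with ξ hξ
    rw [hUc ξ, if_neg (not_lt.mpr hξ.le)]
  -- item 6
  have item6 : ∀ ξ : ℝ, ξ0 < ξ → -c * deriv Uc ξ = deriv Uc ξ + deriv (deriv Uc) ξ := by
    intro ξ hξ
    rw [hdUr ξ hξ, hddUr ξ hξ]; ring
  -- item 7
  have item7 : ∀ ξ : ℝ, ξ < ξ0 → -c * deriv Uc ξ = -deriv Uc ξ + deriv (deriv Uc) ξ := by
    intro ξ hξ
    rw [hdUl ξ hξ, hddUl ξ hξ]; ring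
  refine ⟨item1, item2, item3, item4, item5, item6, item7, ?_⟩
  intro t x hne
  have hinnerT : HasDerivAt (fun s : ℝ => x - c*s) (-c) t := by
    simpa using ((hasDerivAt_id t).const_mul c).const_sub x
  have hinner : ∀ y : ℝ, HasDerivAt (fun z : ℝ => z - c*t) 1 y := by
    intro y; simpa using (hasDerivAt_id y).sub_const (c*t)
  rcases hne.lt_or_gt with hlt | hgt
  · -- left of the interface : x - c*t < ξ0
    set p := x - c*t with hp
    have hL : deriv (fun s : ℝ => Uc (x - c*s)) t
        = (-(Um*(1-c)) * Real.exp ((1-c)*(p-ξ0))) * (-c) := by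
      have := (hU'l p hlt).comp t hinnerT
      exact this.deriv
    have habs : (fun y : ℝ => |Uc (y - c*t)|) =ᶠ[nhds x] (fun y => -(Uc (y - c*t))) := by
      filter_upwards [Iio_mem_nhds (show x < ξ0 + c*t by linarith)] with y hy
      have : y - c*t < ξ0 := by simp only [Set.mem_Iio] at hy; linarith
      exact abs_of_neg (item3 _ this)
    have hT1 : deriv (fun y : ℝ => |Uc (y - c*t)|) x
        = -(-(Um*(1-c)) * Real.exp ((1-c)*(p-ξ0))) := by
      rw [habs.deriv_eq]
      have h := ((hU'l p hlt).comp x (hinner x)).neg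
      simpa [Function.comp_def] using h.deriv
    have hev2 : deriv (fun y : ℝ => Uc (y - c*t)) =ᶠ[nhds x]
        (fun y => -(Um*(1-c)) * Real.exp ((1-c)*((y - c*t)-ξ0))) := by
      filter_upwards [Iio_mem_nhds (show x < ξ0 + c*t by linarith)] with y hy
      have hy' : y - c*t < ξ0 := by simp only [Set.mem_Iio] at hy; linarith
      have := (hU'l (y - c*t) hy').comp y (hinner y)
      simpa [Function.comp_def] using this.deriv
    have hT2 : deriv (deriv (fun y : ℝ => Uc (y - c*t))) x
        = (1-c) * (-(Um*(1-c)) * Real.exp ((1-c)*(p-ξ0))) := by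
      rw [hev2.deriv_eq]
      have h := (hdg p).comp x (hinner x)
      simp only [Function.comp_def] at h
      rw [h.deriv, mul_one]
    rw [hL, hT1, hT2]; ring
  · -- right of the interface : ξ0 < x - c*t
    set p := x - c*t with hp
    have hL : deriv (fun s : ℝ => Uc (x - c*s)) t
        = (Up*(1+c) * Real.exp ((1+c)*(ξ0-p))) * (-c) := by
      have := (hU'r p hgt).comp t hinnerT
      exact this.deriv
    have habs : (fun y : ℝ => |Uc (y - c*t)|) =ᶠ[nhds x] (fun y => Uc (y - c*t)) := by
      filter_upwards [Ioi_mem_nhds (show ξ0 + c*t < x by linarith)] with y hy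
      have : ξ0 < y - c*t := by simp only [Set.mem_Ioi] at hy; linarith
      exact abs_of_pos (item2 _ this)
    have hT1 : deriv (fun y : ℝ => |Uc (y - c*t)|) x
        = Up*(1+c) * Real.exp ((1+c)*(ξ0-p)) := by
      rw [habs.deriv_eq]
      have h := (hU'r p hgt).comp x (hinner x)
      simpa [Function.comp_def] using h.deriv
    have hev2 : deriv (fun y : ℝ => Uc (y - c*t)) =ᶠ[nhds x]
        (fun y => Up*(1+c) * Real.exp ((1+c)*(ξ0-(y - c*t)))) := by
      filter_upwards [Ioi_mem_nhds (show ξ0 + c*t < x by linarith)] with y hy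
      have hy' : ξ0 < y - c*t := by simp only [Set.mem_Ioi] at hy; linarith
      have := (hU'r (y - c*t) hy').comp y (hinner y)
      simpa [Function.comp_def] using this.deriv
    have hT2 : deriv (deriv (fun y : ℝ => Uc (y - c*t))) x
        = -(1+c) * (Up*(1+c) * Real.exp ((1+c)*(ξ0-p))) := by
      rw [hev2.deriv_eq]
      have h := (hdf p).comp x (hinner x)
      simp only [Function.comp_def] at h
      rw [h.deriv, mul_one]
    rw [hL, hT1, hT2]; ring
end

section
/- Let U_+ and U_- be real numbers with U_- < 0 < U_+, let ξ_0 ∈ ℝ, let c = -(U_+ + U_-)/(U_+ - U_-), and define U_c : ℝ → ℝ by U_c(ξ) = U_+(1 - e^{(1+c)(ξ_0 - ξ)}) for ξ > ξ_0 and U_c(ξ) = U_-(1 - e^{(1-c)(ξ - ξ_0)}) for ξ ≤ ξ_0. Then the one-sided second derivatives of U_c at ξ_0 satisfy the jump condition U_c''(ξ_0+0) - U_c''(ξ_0-0) = -2|U_c'(ξ_0)|, where U_c'(ξ_0) denotes the common value of the one-sided first derivatives at ξ_0. -/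
open Set Real

/-- Jump condition at the interface of the traveling viscous shock of the modular
Burgers' equation: with the selected speed `c = -(U_+ + U_-)/(U_+ - U_-)`, the one-sided
second derivatives of the profile `U_c` at the interface `ξ0` satisfy
`U_c''(ξ0+0) - U_c''(ξ0-0) = -2|U_c'(ξ0)|`, where `U_c'(ξ0)` is the common value of
the one-sided first derivatives at `ξ0`. -/
theorem stmt_2 (Up Um : ℝ) (hUm : Um < 0) (hUp : 0 < Up) (ξ0 : ℝ)
    (c : ℝ) (hc : c = -(Up + Um) / (Up - Um))
    (Uc : ℝ → ℝ)
    (hUc : ∀ ξ : ℝ, Uc ξ =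
      if ξ0 < ξ then Up * (1 - Real.exp ((1 + c) * (ξ0 - ξ)))
      else Um * (1 - Real.exp ((1 - c) * (ξ - ξ0)))) :
    derivWithin (deriv Uc) (Set.Ici ξ0) ξ0 - derivWithin (deriv Uc) (Set.Iic ξ0) ξ0 =
      -2 * |deriv Uc ξ0| := by
  have hden : Up - Um ≠ 0 := by linarith
  set a : ℝ := Up * (1 + c) with ha
  have ha2 : -Um * (1 - c) = a := by
    rw [ha, hc]; field_simp; ring
  have ha3 : a = -2 * Up * Um / (Up - Um) := by
    rw [ha, hc]; field_simp; ring
  have ha_pos : 0 < a := by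
    rw [ha3]
    apply div_pos (by nlinarith) (by linarith)
  set f : ℝ → ℝ := fun ξ => Up * (1 - Real.exp ((1 + c) * (ξ0 - ξ))) with hfdef
  set g : ℝ → ℝ := fun ξ => Um * (1 - Real.exp ((1 - c) * (ξ - ξ0))) with hgdef
  -- derivatives of the two branches
  have hf : ∀ ξ : ℝ, HasDerivAt f (Up * (1 + c) * Real.exp ((1 + c) * (ξ0 - ξ))) ξ := by
    intro ξ
    have h1 : HasDerivAt (fun ξ : ℝ => (1 + c) * (ξ0 - ξ)) (-(1 + c)) ξ := by
      simpa using ((hasDerivAt_id ξ).const_sub ξ0).const_mul (1 + c)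
    have h2 := (h1.exp.const_sub 1).const_mul Up
    exact h2.congr_deriv (by ring)
  have hg : ∀ ξ : ℝ, HasDerivAt g (-Um * (1 - c) * Real.exp ((1 - c) * (ξ - ξ0))) ξ := by
    intro ξ
    have h1 : HasDerivAt (fun ξ : ℝ => (1 - c) * (ξ - ξ0)) (1 - c) ξ := by
      simpa using ((hasDerivAt_id ξ).sub_const ξ0).const_mul (1 - c)
    have h2 := (h1.exp.const_sub 1).const_mul Um
    exact h2.congr_deriv (by ring)
  -- Uc agrees with the branches
  have hUg : EqOn Uc g (Iic ξ0) := by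
    intro ξ hξ
    rw [hUc ξ, if_neg (not_lt.mpr hξ)]
  have hUf : EqOn Uc f (Ici ξ0) := by
    intro ξ hξ
    rcases eq_or_lt_of_le (mem_Ici.mp hξ) with h | h
    · rw [hUc ξ, if_neg (by simp [← h]), ← h]
      simp [hgdef, hfdef]
    · rw [hUc ξ, if_pos h]
  -- Uc is differentiable at ξ0 with derivative a
  have hWi : HasDerivWithinAt Uc a (Iic ξ0) ξ0 := by
    have h' : HasDerivWithinAt g a (Iic ξ0) ξ0 := by
      have := (hg ξ0).hasDerivWithinAt (s := Iic ξ0)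
      simpa [ha2] using this
    exact h'.congr (fun y hy => hUg hy) (hUg self_mem_Iic)
  have hWs : HasDerivWithinAt Uc a (Ici ξ0) ξ0 := by
    have h' : HasDerivWithinAt f a (Ici ξ0) ξ0 := by
      have := (hf ξ0).hasDerivWithinAt (s := Ici ξ0)
      simpa [ha] using this
    exact h'.congr (fun y hy => hUf hy) (hUf self_mem_Ici)
  have hU0 : HasDerivAt Uc a ξ0 := by
    have h := hWi.union hWs
    rw [Set.Iic_union_Ici] at h
    exact hasDerivWithinAt_univ.mp h
  have hderiv0 : deriv Uc ξ0 = a := hU0.deriv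
  -- deriv Uc on each open side
  have hdf : ∀ ξ ∈ Ioi ξ0, deriv Uc ξ = Up * (1 + c) * Real.exp ((1 + c) * (ξ0 - ξ)) := by
    intro ξ hξ
    have hev : Uc =ᶠ[nhds ξ] f := by
      filter_upwards [Ioi_mem_nhds hξ] with y hy
      exact hUf (mem_Ici.mpr (le_of_lt (mem_Ioi.mp hy)))
    rw [hev.deriv_eq, (hf ξ).deriv]
  have hdg : ∀ ξ ∈ Iio ξ0, deriv Uc ξ = -Um * (1 - c) * Real.exp ((1 - c) * (ξ - ξ0)) := by
    intro ξ hξ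
    have hev : Uc =ᶠ[nhds ξ] g := by
      filter_upwards [Iio_mem_nhds hξ] with y hy
      exact hUg (mem_Iic.mpr (le_of_lt (mem_Iio.mp hy)))
    rw [hev.deriv_eq, (hg ξ).deriv]
  -- second derivative from the right
  have hF : ∀ ξ : ℝ, HasDerivAt
      (fun ξ => Up * (1 + c) * Real.exp ((1 + c) * (ξ0 - ξ)))
      (-(Up * (1 + c) * (1 + c)) * Real.exp ((1 + c) * (ξ0 - ξ))) ξ := by
    intro ξ
    have h1 : HasDerivAt (fun ξ : ℝ => (1 + c) * (ξ0 - ξ)) (-(1 + c)) ξ := by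
      simpa using ((hasDerivAt_id ξ).const_sub ξ0).const_mul (1 + c)
    have h2 := h1.exp.const_mul (Up * (1 + c))
    exact h2.congr_deriv (by ring)
  have hG : ∀ ξ : ℝ, HasDerivAt
      (fun ξ => -Um * (1 - c) * Real.exp ((1 - c) * (ξ - ξ0)))
      (-Um * (1 - c) * (1 - c) * Real.exp ((1 - c) * (ξ - ξ0))) ξ := by
    intro ξ
    have h1 : HasDerivAt (fun ξ : ℝ => (1 - c) * (ξ - ξ0)) (1 - c) ξ := by
      simpa using ((hasDerivAt_id ξ).sub_const ξ0).const_mul (1 - c)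
    have h2 := h1.exp.const_mul (-Um * (1 - c))
    exact h2.congr_deriv (by ring)
  have hEqR : EqOn (deriv Uc) (fun ξ => Up * (1 + c) * Real.exp ((1 + c) * (ξ0 - ξ)))
      (Ici ξ0) := by
    intro ξ hξ
    rcases eq_or_lt_of_le (mem_Ici.mp hξ) with h | h
    · rw [← h, hderiv0]; simp [ha]
    · exact hdf ξ h
  have hEqL : EqOn (deriv Uc) (fun ξ => -Um * (1 - c) * Real.exp ((1 - c) * (ξ - ξ0)))
      (Iic ξ0) := by
    intro ξ hξ
    rcases eq_or_lt_of_le (mem_Iic.mp hξ) with h | h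
    · rw [h, hderiv0]; simp [← ha2]
    · exact hdg ξ h
  have hR : derivWithin (deriv Uc) (Ici ξ0) ξ0 = -(Up * (1 + c) * (1 + c)) := by
    have hw : HasDerivWithinAt (deriv Uc) (-(Up * (1 + c) * (1 + c))) (Ici ξ0) ξ0 := by
      have h' := ((hF ξ0).hasDerivWithinAt (s := Ici ξ0)).congr
        (fun y hy => hEqR hy) (hEqR self_mem_Ici)
      simpa using h'
    exact hw.derivWithin (uniqueDiffOn_Ici ξ0 ξ0 self_mem_Ici)
  have hL : derivWithin (deriv Uc) (Iic ξ0) ξ0 = -Um * (1 - c) * (1 - c) := by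
    have hw : HasDerivWithinAt (deriv Uc) (-Um * (1 - c) * (1 - c)) (Iic ξ0) ξ0 := by
      have h' := ((hG ξ0).hasDerivWithinAt (s := Iic ξ0)).congr
        (fun y hy => hEqL hy) (hEqL self_mem_Iic)
      simpa using h'
    exact hw.derivWithin (uniqueDiffOn_Iic ξ0 ξ0 self_mem_Iic)
  rw [hR, hL, hderiv0, abs_of_pos ha_pos]
  have h1 : Up * (1 + c) = a := ha.symm
  nlinarith [ha2, h1]
end

section
/- There is no traveling viscous shock of the modular Burgers' equation with multiple interfaces. Precisely: let c ∈ ℝ and ξ_1 < ξ_2, and suppose U : [ξ_1, ξ_2] → ℝ is twice continuously differentiable on (ξ_1, ξ_2) and continuous on [ξ_1, ξ_2] with U(ξ_1) = U(ξ_2) = 0, U(ξ) > 0 for ξ_1 < ξ < ξ_2, and -c U'(ξ) = U'(ξ) + U''(ξ) for all ξ ∈ (ξ_1, ξ_2) (the equation satisfied by a traveling-wave profile u(t,x) = U(x - ct) on the region where U > 0). Then a contradiction follows; i.e. no such U exists. -/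
open Set

/-- No traveling viscous shock of the modular Burgers' equation with multiple
interfaces exists: there is no profile `U`, continuous on `[ξ1,ξ2]` and twice
continuously differentiable on `(ξ1,ξ2)`, vanishing at two consecutive interfaces
`ξ1 < ξ2`, positive in between, and satisfying the traveling-wave equation
`-cU' = U' + U''` on `(ξ1,ξ2)`. -/
theorem stmt_6 (c ξ1 ξ2 : ℝ) (hlt : ξ1 < ξ2) (U : ℝ → ℝ)
    (hcont : ContinuousOn U (Set.Icc ξ1 ξ2))
    (hC2 : ContDiffOn ℝ 2 U (Set.Ioo ξ1 ξ2))
    (h1 : U ξ1 = 0) (h2 : U ξ2 = 0)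
    (hpos : ∀ ξ ∈ Set.Ioo ξ1 ξ2, 0 < U ξ)
    (hODE : ∀ ξ ∈ Set.Ioo ξ1 ξ2, -c * deriv U ξ = deriv U ξ + deriv (deriv U) ξ) :
    False := by
  set s : Set ℝ := Set.Ioo ξ1 ξ2 with hs
  have hsopen : IsOpen s := isOpen_Ioo
  -- U is differentiable on s, and its derivative is differentiable on s
  have hUdiff : DifferentiableOn ℝ U s := hC2.differentiableOn (by norm_num)
  have hC1' : ContDiffOn ℝ 1 (deriv U) s := by
    have := (contDiffOn_succ_iff_deriv_of_isOpen (f := U) (n := 1) hsopen).mp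
      (by exact_mod_cast hC2)
    exact this.2.2
  have hVdiff : DifferentiableOn ℝ (deriv U) s := hC1'.differentiableOn (by norm_num)
  set k : ℝ := -(1 + c) with hk
  have hODE' : ∀ ξ ∈ s, deriv (deriv U) ξ = k * deriv U ξ := by
    intro ξ hξ
    have := hODE ξ hξ
    ring_nf
    ring_nf at this
    linarith
  -- there is an interior maximum point ξ0 of U, where deriv U ξ0 = 0
  obtain ⟨ξ0, hξ0mem, hξ0max⟩ :=
    isCompact_Icc.exists_isMaxOn (Set.nonempty_Icc.mpr hlt.le) hcont
  have hmid : (ξ1 + ξ2) / 2 ∈ s := ⟨by linarith, by linarith⟩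
  have hU0pos : 0 < U ξ0 := lt_of_lt_of_le (hpos _ hmid)
    (hξ0max (Set.mem_Icc.mpr ⟨by linarith [hmid.1], by linarith [hmid.2]⟩))
  have hξ0 : ξ0 ∈ s := by
    rcases Set.mem_Icc.mp hξ0mem with ⟨ha, hb⟩
    constructor
    · rcases lt_or_eq_of_le ha with h | h
      · exact h
      · exfalso; rw [← h, h1] at hU0pos; exact lt_irrefl 0 hU0pos
    · rcases lt_or_eq_of_le hb with h | h
      · exact h
      · exfalso; rw [h, h2] at hU0pos; exact lt_irrefl 0 hU0pos
  have hlocmax : IsLocalMax U ξ0 :=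
    hξ0max.isLocalMax (Icc_mem_nhds (by exact hξ0.1) (by exact hξ0.2))
  have hderiv0 : deriv U ξ0 = 0 := hlocmax.deriv_eq_zero
  -- g := deriv U * exp(-k ξ) has zero derivative on s
  set g : ℝ → ℝ := fun ξ => deriv U ξ * Real.exp (-k * ξ) with hg
  have hgderiv : ∀ ξ ∈ s, HasDerivAt g 0 ξ := by
    intro ξ hξ
    have hV : HasDerivAt (deriv U) (deriv (deriv U) ξ) ξ :=
      ((hVdiff ξ hξ).differentiableAt (hsopen.mem_nhds hξ)).hasDerivAt
    have he : HasDerivAt (fun ξ => Real.exp (-k * ξ)) (-k * Real.exp (-k * ξ)) ξ := by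
      have hlin : HasDerivAt (fun ξ : ℝ => -k * ξ) (-k) ξ := by
        simpa using (hasDerivAt_id ξ).const_mul (-k)
      simpa [mul_comm] using hlin.exp
    have := hV.fun_mul he
    rw [hODE' ξ hξ] at this
    convert this using 1
    · rfl
    · rfl
    · ring
  have hgdiff : DifferentiableOn ℝ g s := fun ξ hξ =>
    ((hgderiv ξ hξ).differentiableAt).differentiableWithinAt
  have hgconst : ∀ ξ ∈ s, g ξ = g ξ0 := by
    intro ξ hξ
    apply (convex_Ioo ξ1 ξ2).is_const_of_fderivWithin_eq_zero hgdiff _ hξ hξ0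
    intro x hx
    rw [fderivWithin_of_isOpen hsopen hx]
    ext
    simp [(hgderiv x hx).deriv, ← toSpanSingleton_deriv]
  have hg0 : g ξ0 = 0 := by simp [hg, hderiv0]
  have hVzero : ∀ ξ ∈ s, deriv U ξ = 0 := by
    intro ξ hξ
    have := hgconst ξ hξ
    rw [hg0, hg] at this
    have hexp : Real.exp (-k * ξ) ≠ 0 := Real.exp_ne_zero _
    exact (mul_eq_zero.mp this).resolve_right hexp
  -- hence U is constant on s
  have hUconst : ∀ ξ ∈ s, U ξ = U ξ0 := by
    intro ξ hξ
    apply (convex_Ioo ξ1 ξ2).is_const_of_fderivWithin_eq_zero hUdiff _ hξ hξ0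
    intro x hx
    rw [fderivWithin_of_isOpen hsopen hx]
    ext
    simp [← toSpanSingleton_deriv, hVzero x hx]
  -- take the limit at ξ1 to contradict U ξ1 = 0
  have hcw : ContinuousWithinAt U s ξ1 :=
    (hcont ξ1 (Set.left_mem_Icc.mpr hlt.le)).mono Set.Ioo_subset_Icc_self
  have hne : (nhdsWithin ξ1 s).NeBot := left_nhdsWithin_Ioo_neBot hlt
  have htend : Filter.Tendsto U (nhdsWithin ξ1 s) (nhds 0) := by
    rw [← h1]; exact hcw
  have htend' : Filter.Tendsto U (nhdsWithin ξ1 s) (nhds (U ξ0)) := by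
    apply Filter.Tendsto.congr' _ tendsto_const_nhds
    filter_upwards [self_mem_nhdsWithin] with x hx
    exact (hUconst x hx).symm
  have : (0 : ℝ) = U ξ0 := tendsto_nhds_unique htend htend'
  linarith
end
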